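/- arXiv:2604.26826 — 4 statements merged into one kernel-verified Lean document; each statement's English description precedes it below -/
import Mathlib

section
/- (Lemma A.1, uniform convergence of sample second-moment matrices.) Fix d ∈ ℕ, ε > 0, and Σ ∈ Matrix (Fin d) (Fin d) ℝ. For each integer N ≥ 1 let α⁰_N : Fin N → EuclideanSpace ℝ (Fin d), and assume that ‖(1/N) · ∑_{i : Fin N} Matrix.vecMulVec (α⁰_N i) (α⁰_N i) − Σ‖_F → 0 as N → ∞. Then the convergence of sample second-moment matrices holds uniformly over the ε-ball around α⁰_N: for every δ > 0 there exists N₀ such that for every N ≥ N₀ and every α : Fin N → EuclideanSpace ℝ (Fin d) satisfying ∑_{i : Fin N} ‖α i − α⁰_N i‖² ≤ ε², one has ‖(1/N) · ∑_{i : Fin N} Matrix.vecMulVec (α i) (α i) − Σ‖_F ≤ δ. -/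
open scoped BigOperators

attribute [local instance] Matrix.frobeniusSeminormedAddCommGroup

lemma frob_sq {d : ℕ} (A : Matrix (Fin d) (Fin d) ℝ) : ‖A‖^2 = ∑ i, ∑ j, (A i j)^2 := by
  rw [Matrix.frobenius_norm_def, ← Real.rpow_natCast _ 2, ← Real.rpow_mul (by positivity)]
  norm_num

lemma entry_le_frob {d : ℕ} (A : Matrix (Fin d) (Fin d) ℝ) (i j : Fin d) : |A i j| ≤ ‖A‖ := by
  have h : (A i j)^2 ≤ ‖A‖^2 := by
    rw [frob_sq]
    calc (A i j)^2 ≤ ∑ j', (A i j')^2 :=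
      Finset.single_le_sum (f := fun j' => (A i j')^2) (fun _ _ => sq_nonneg _) (Finset.mem_univ j)
    _ ≤ ∑ i', ∑ j', (A i' j')^2 :=
      Finset.single_le_sum (f := fun i' => ∑ j', (A i' j')^2)
        (fun _ _ => Finset.sum_nonneg fun _ _ => sq_nonneg _) (Finset.mem_univ i)
  calc |A i j| = Real.sqrt ((A i j)^2) := (Real.sqrt_sq_eq_abs _).symm
  _ ≤ Real.sqrt (‖A‖^2) := Real.sqrt_le_sqrt h
  _ = ‖A‖ := Real.sqrt_sq (norm_nonneg _)

lemma eucl_sq {d : ℕ} (u : EuclideanSpace ℝ (Fin d)) : ‖u‖^2 = ∑ i, (u i)^2 := by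
  rw [EuclideanSpace.norm_eq, Real.sq_sqrt (by positivity)]
  simp [sq_abs]

lemma frob_vecMulVec {d : ℕ} (u v : EuclideanSpace ℝ (Fin d)) :
    ‖Matrix.vecMulVec u v‖ = ‖u‖ * ‖v‖ := by
  have h1 : ‖Matrix.vecMulVec u v‖^2 = (‖u‖ * ‖v‖)^2 := by
    rw [frob_sq, mul_pow, eucl_sq, eucl_sq, Finset.sum_mul_sum]
    simp [Matrix.vecMulVec_apply, mul_pow]
  nlinarith [norm_nonneg (Matrix.vecMulVec u v), mul_nonneg (norm_nonneg u) (norm_nonneg v)]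

lemma aux_sqrt (N : ℕ) (hN : 1 ≤ N) (C : ℝ) (hC : 0 ≤ C) :
    (1/(N:ℝ)) * Real.sqrt ((N:ℝ) * C) = Real.sqrt (C / N) := by
  have hN0 : (0:ℝ) < N := by exact_mod_cast hN
  rw [eq_comm, show C / (N:ℝ) = (1/(N:ℝ))^2 * ((N:ℝ)*C) by field_simp,
    Real.sqrt_mul (by positivity), Real.sqrt_sq (by positivity)]

set_option maxHeartbeats 2000000 in
/-- Lemma A.1: uniform convergence of sample second-moment matrices over an
`ε`-ball around the reference loadings. -/
theorem uniform_convergence_second_moment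
    (d : ℕ) (ε : ℝ) (hε : 0 < ε) (Sig : Matrix (Fin d) (Fin d) ℝ)
    (α0 : (N : ℕ) → Fin N → EuclideanSpace ℝ (Fin d))
    (hconv : Filter.Tendsto
      (fun N : ℕ =>
        ‖(1 / (N : ℝ)) • (∑ i : Fin N, Matrix.vecMulVec (α0 N i) (α0 N i)) - Sig‖)
      Filter.atTop (nhds 0)) :
    ∀ δ > (0 : ℝ), ∃ N₀ : ℕ, ∀ N : ℕ, N₀ ≤ N → 1 ≤ N →
      ∀ α : Fin N → EuclideanSpace ℝ (Fin d),
        (∑ i : Fin N, ‖α i - α0 N i‖ ^ 2) ≤ ε ^ 2 →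
        ‖(1 / (N : ℝ)) • (∑ i : Fin N, Matrix.vecMulVec (α i) (α i)) - Sig‖ ≤ δ := by
  intro δ hδ
  set e : ℕ → ℝ := fun N =>
    ‖(1 / (N : ℝ)) • (∑ i : Fin N, Matrix.vecMulVec (α0 N i) (α0 N i)) - Sig‖ with he
  set T : ℝ := |∑ j, Sig j j| with hTdef
  have hT0 : 0 ≤ T := abs_nonneg _
  set g : ℕ → ℝ := fun N => e N + 2 * ε * Real.sqrt ((T + d * e N) / N) + ε^2 / N with hgdef
  -- g tends to 0
  have h1 : Filter.Tendsto (fun N : ℕ => (T + d * e N) / N) Filter.atTop (nhds 0) := by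
    have h2 : Filter.Tendsto (fun N : ℕ => T + d * e N) Filter.atTop (nhds T) := by
      have := (hconv.const_mul (d:ℝ)).const_add T
      simpa only [mul_zero, add_zero] using this
    have hinv : Filter.Tendsto (fun N : ℕ => ((N:ℝ))⁻¹) Filter.atTop (nhds 0) :=
      tendsto_inv_atTop_zero.comp tendsto_natCast_atTop_atTop
    simpa [div_eq_mul_inv] using h2.mul hinv
  have hg0 : Filter.Tendsto g Filter.atTop (nhds 0) := by
    have hsqrt := h1.sqrt
    rw [Real.sqrt_zero] at hsqrt
    have h3 := (hsqrt.const_mul (2*ε)).const_add 0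
    have h4 : Filter.Tendsto (fun N : ℕ => ε^2 / N) Filter.atTop (nhds 0) :=
      tendsto_const_div_atTop_nhds_zero_nat _
    have := (hconv.add (hsqrt.const_mul (2*ε))).add h4
    simpa [hgdef, mul_comm] using this
  obtain ⟨N₀, hN₀⟩ := Metric.tendsto_atTop.mp hg0 δ hδ
  refine ⟨N₀, fun N hN hN1 α hα => ?_⟩
  have hNpos : (0:ℝ) < N := by exact_mod_cast hN1
  set a : Fin N → EuclideanSpace ℝ (Fin d) := α0 N with hadef
  set h : Fin N → EuclideanSpace ℝ (Fin d) := fun i => α i - a i with hhdef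
  have hgN : g N ≤ δ := by
    have := hN₀ N hN
    rw [Real.dist_eq, sub_zero] at this
    exact (le_abs_self _).trans this.le
  set C : ℝ := T + d * e N with hCdef
  have heN0 : 0 ≤ e N := norm_nonneg _
  have hC0 : 0 ≤ C := by positivity
  -- sum of squared norms of a bounded
  have ha2 : ∑ i, ‖a i‖^2 ≤ (N:ℝ) * C := by
    set M : Matrix (Fin d) (Fin d) ℝ := ∑ i, Matrix.vecMulVec (a i) (a i) with hMdef
    have hMjj : ∀ j, M j j = ∑ i, (a i j)^2 := by
      intro j; simp [hMdef, Matrix.sum_apply, Matrix.vecMulVec_apply, sq]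
    have hkey : ∑ i, ‖a i‖^2 = ∑ j, M j j := by
      simp only [eucl_sq, hMjj]
      exact Finset.sum_comm
    have hD : ∀ j, M j j = (N:ℝ) * (((1/(N:ℝ)) • M - Sig) j j + Sig j j) := by
      intro j
      simp [Matrix.sub_apply, Matrix.smul_apply, smul_eq_mul]
      field_simp
    have hDe : ∀ j, |((1/(N:ℝ)) • M - Sig) j j| ≤ e N := fun j => entry_le_frob _ j j
    rw [hkey]
    calc ∑ j, M j j = (N:ℝ) * ∑ j, (((1/(N:ℝ)) • M - Sig) j j + Sig j j) := by
          rw [Finset.mul_sum]; exact Finset.sum_congr rfl fun j _ => hD j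
    _ ≤ (N:ℝ) * C := by
        apply mul_le_mul_of_nonneg_left _ hNpos.le
        rw [Finset.sum_add_distrib, hCdef]
        have h5 : ∑ j, ((1/(N:ℝ)) • M - Sig) j j ≤ (d:ℝ) * e N := by
          calc ∑ j, ((1/(N:ℝ)) • M - Sig) j j ≤ ∑ j : Fin d, e N :=
                Finset.sum_le_sum fun j _ => (le_abs_self _).trans (hDe j)
          _ = (d:ℝ) * e N := by simp [mul_comm]
        have h6 : ∑ j, Sig j j ≤ T := le_abs_self _
        linarith
  -- Cauchy-Schwarz
  have hh2 : ∑ i, ‖h i‖^2 ≤ ε^2 := hα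
  have hCS : ∑ i, ‖a i‖ * ‖h i‖ ≤ Real.sqrt ((N:ℝ) * C) * ε := by
    have hcs := Finset.sum_mul_sq_le_sq_mul_sq Finset.univ (fun i => ‖a i‖) (fun i => ‖h i‖)
    have hnn : 0 ≤ ∑ i, ‖a i‖ * ‖h i‖ :=
      Finset.sum_nonneg fun i _ => mul_nonneg (norm_nonneg _) (norm_nonneg _)
    calc ∑ i, ‖a i‖ * ‖h i‖ = Real.sqrt ((∑ i, ‖a i‖ * ‖h i‖)^2) := (Real.sqrt_sq hnn).symm
    _ ≤ Real.sqrt ((∑ i, ‖a i‖^2) * ∑ i, ‖h i‖^2) := Real.sqrt_le_sqrt hcs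
    _ ≤ Real.sqrt (((N:ℝ) * C) * ε^2) := by
        apply Real.sqrt_le_sqrt
        apply mul_le_mul ha2 hh2 (Finset.sum_nonneg fun i _ => sq_nonneg _) (by positivity)
    _ = Real.sqrt ((N:ℝ) * C) * ε := by
        rw [Real.sqrt_mul (by positivity), Real.sqrt_sq hε.le]
  -- decomposition
  have hterm : ∀ i, Matrix.vecMulVec (α i) (α i)
      = Matrix.vecMulVec (a i) (a i) + (Matrix.vecMulVec (a i) (h i)
        + Matrix.vecMulVec (h i) (a i) + Matrix.vecMulVec (h i) (h i)) := by
    intro i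
    ext j k
    simp [Matrix.vecMulVec_apply, Matrix.add_apply, hhdef, PiLp.sub_apply]
    ring
  have hdecomp : (1/(N:ℝ)) • (∑ i, Matrix.vecMulVec (α i) (α i)) - Sig
      = ((1/(N:ℝ)) • (∑ i, Matrix.vecMulVec (a i) (a i)) - Sig)
        + (1/(N:ℝ)) • (∑ i, (Matrix.vecMulVec (a i) (h i)
          + Matrix.vecMulVec (h i) (a i) + Matrix.vecMulVec (h i) (h i))) := by
    rw [show (∑ i, Matrix.vecMulVec (α i) (α i))
        = (∑ i, Matrix.vecMulVec (a i) (a i)) + ∑ i, (Matrix.vecMulVec (a i) (h i)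
          + Matrix.vecMulVec (h i) (a i) + Matrix.vecMulVec (h i) (h i)) by
      rw [← Finset.sum_add_distrib]; exact Finset.sum_congr rfl fun i _ => hterm i]
    rw [smul_add]
    abel
  -- norm bound on the perturbation part
  have hpert : ‖(1/(N:ℝ)) • (∑ i, (Matrix.vecMulVec (a i) (h i)
      + Matrix.vecMulVec (h i) (a i) + Matrix.vecMulVec (h i) (h i)))‖
      ≤ (1/(N:ℝ)) * (2 * (Real.sqrt ((N:ℝ) * C) * ε) + ε^2) := by
    haveI : NormSMulClass ℝ (Matrix (Fin d) (Fin d) ℝ) := Matrix.frobeniusNormSMulClass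
    rw [norm_smul]
    have hsum : ‖∑ i, (Matrix.vecMulVec (a i) (h i)
        + Matrix.vecMulVec (h i) (a i) + Matrix.vecMulVec (h i) (h i))‖
        ≤ ∑ i, (‖a i‖ * ‖h i‖ + ‖h i‖ * ‖a i‖ + ‖h i‖ * ‖h i‖) := by
      refine (norm_sum_le _ _).trans (Finset.sum_le_sum fun i _ => ?_)
      calc ‖Matrix.vecMulVec (a i) (h i) + Matrix.vecMulVec (h i) (a i)
            + Matrix.vecMulVec (h i) (h i)‖
          ≤ ‖Matrix.vecMulVec (a i) (h i)‖ + ‖Matrix.vecMulVec (h i) (a i)‖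
            + ‖Matrix.vecMulVec (h i) (h i)‖ := norm_add₃_le
      _ = ‖a i‖ * ‖h i‖ + ‖h i‖ * ‖a i‖ + ‖h i‖ * ‖h i‖ := by
          rw [frob_vecMulVec, frob_vecMulVec, frob_vecMulVec]
    have hsum2 : ∑ i, (‖a i‖ * ‖h i‖ + ‖h i‖ * ‖a i‖ + ‖h i‖ * ‖h i‖)
        ≤ 2 * (Real.sqrt ((N:ℝ) * C) * ε) + ε^2 := by
      have : ∑ i, (‖a i‖ * ‖h i‖ + ‖h i‖ * ‖a i‖ + ‖h i‖ * ‖h i‖)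
          = 2 * (∑ i, ‖a i‖ * ‖h i‖) + ∑ i, ‖h i‖^2 := by
        rw [Finset.mul_sum, ← Finset.sum_add_distrib]
        exact Finset.sum_congr rfl fun i _ => by ring
      rw [this]
      linarith
    have habs : ‖(1/(N:ℝ))‖ = 1/(N:ℝ) := by
      rw [Real.norm_eq_abs, abs_of_pos (by positivity)]
    rw [habs]
    exact mul_le_mul_of_nonneg_left ((hsum).trans hsum2) (by positivity)
  -- conclude
  have hsqrtEq : (1/(N:ℝ)) * Real.sqrt ((N:ℝ) * C) = Real.sqrt (C / N) :=
    aux_sqrt N hN1 C hC0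
  calc ‖(1/(N:ℝ)) • (∑ i, Matrix.vecMulVec (α i) (α i)) - Sig‖
      ≤ e N + ‖(1/(N:ℝ)) • (∑ i, (Matrix.vecMulVec (a i) (h i)
        + Matrix.vecMulVec (h i) (a i) + Matrix.vecMulVec (h i) (h i)))‖ := by
        rw [hdecomp]; exact norm_add_le _ _
  _ ≤ e N + (1/(N:ℝ)) * (2 * (Real.sqrt ((N:ℝ) * C) * ε) + ε^2) := by linarith
  _ = g N := by
      show _ = e N + 2 * ε * Real.sqrt ((T + (d:ℝ) * e N) / N) + ε^2 / N
      rw [show T + (d:ℝ) * e N = C from hCdef.symm]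
      linear_combination (2*ε) * hsqrtEq
  _ ≤ δ := hgN
end

section
/- (Outer-product difference bound, the key display in the proof of Lemma A.1.) For every integer N ≥ 1, every d ∈ ℕ, and all u, v : Fin N → EuclideanSpace ℝ (Fin d), one has ‖(1/N) · ∑_{i : Fin N} (Matrix.vecMulVec (u i) (u i) − Matrix.vecMulVec (v i) (v i))‖_F ≤ (√((1/N) · ∑_{i : Fin N} ‖u i‖²) + √((1/N) · ∑_{i : Fin N} ‖v i‖²)) · √((1/N) · ∑_{i : Fin N} ‖u i − v i‖²). -/
open scoped BigOperators

attribute [local instance] Matrix.frobeniusSeminormedAddCommGroup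
attribute [local instance] Matrix.frobeniusNormedSpace

lemma norm_vecMulVec_eq {d : ℕ} (a b : EuclideanSpace ℝ (Fin d)) :
    ‖Matrix.vecMulVec a b‖ = ‖a‖ * ‖b‖ := by
  rw [Matrix.frobenius_norm_def]
  simp_rw [Real.rpow_two, Matrix.vecMulVec_apply, Real.norm_eq_abs, sq_abs, mul_pow,
    ← Finset.mul_sum]
  rw [← Finset.sum_mul, EuclideanSpace.norm_eq, EuclideanSpace.norm_eq]
  simp_rw [Real.norm_eq_abs, sq_abs]
  rw [← Real.sqrt_mul (by positivity), Real.sqrt_eq_rpow]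

lemma sum_cs {ι : Type*} (s : Finset ι) (a b : ι → ℝ) :
    ∑ i ∈ s, a i * b i ≤ Real.sqrt (∑ i ∈ s, a i ^ 2) * Real.sqrt (∑ i ∈ s, b i ^ 2) := by
  calc ∑ i ∈ s, a i * b i ≤ |∑ i ∈ s, a i * b i| := le_abs_self _
    _ = Real.sqrt ((∑ i ∈ s, a i * b i) ^ 2) := (Real.sqrt_sq_eq_abs _).symm
    _ ≤ Real.sqrt ((∑ i ∈ s, a i ^ 2) * ∑ i ∈ s, b i ^ 2) :=
        Real.sqrt_le_sqrt (Finset.sum_mul_sq_le_sq_mul_sq s a b)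
    _ = _ := Real.sqrt_mul (by positivity) _

lemma vecMulVec_split {d : ℕ} (a b : EuclideanSpace ℝ (Fin d)) :
    Matrix.vecMulVec a a - Matrix.vecMulVec b b =
      Matrix.vecMulVec a (a - b) + Matrix.vecMulVec (a - b) b := by
  ext i j
  simp [Matrix.vecMulVec_apply]
  ring

/-- Outer-product difference bound: key display in the proof of Lemma A.1. -/
theorem frobenius_norm_avg_vecMulVec_sub_le
    (N : ℕ) (hN : 1 ≤ N) (d : ℕ) (u v : Fin N → EuclideanSpace ℝ (Fin d)) :
    ‖(1 / (N : ℝ)) •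
        (∑ i : Fin N, (Matrix.vecMulVec (u i) (u i) - Matrix.vecMulVec (v i) (v i)))‖ ≤
      (Real.sqrt ((1 / (N : ℝ)) * ∑ i : Fin N, ‖u i‖ ^ 2) +
          Real.sqrt ((1 / (N : ℝ)) * ∑ i : Fin N, ‖v i‖ ^ 2)) *
        Real.sqrt ((1 / (N : ℝ)) * ∑ i : Fin N, ‖u i - v i‖ ^ 2) := by
  have hc : (0:ℝ) ≤ 1 / (N : ℝ) := by positivity
  have key : ∀ c : ℝ, 0 ≤ c → ∀ a b : Fin N → ℝ,
      c * ∑ i, a i * b i ≤ Real.sqrt (c * ∑ i, a i ^ 2) * Real.sqrt (c * ∑ i, b i ^ 2) := by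
    intro c hcn a b
    rw [Real.sqrt_mul hcn, Real.sqrt_mul hcn, mul_mul_mul_comm, Real.mul_self_sqrt hcn]
    exact mul_le_mul_of_nonneg_left (sum_cs _ a b) hcn
  calc ‖(1 / (N : ℝ)) • ∑ i : Fin N,
        (Matrix.vecMulVec (u i) (u i) - Matrix.vecMulVec (v i) (v i))‖
      = (1 / (N : ℝ)) * ‖∑ i : Fin N,
        (Matrix.vecMulVec (u i) (u i) - Matrix.vecMulVec (v i) (v i))‖ := by
        rw [norm_smul, Real.norm_eq_abs, abs_of_nonneg hc]
    _ ≤ (1 / (N : ℝ)) * ∑ i : Fin N, (‖u i‖ * ‖u i - v i‖ + ‖u i - v i‖ * ‖v i‖) := by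
        refine mul_le_mul_of_nonneg_left ?_ hc
        refine (norm_sum_le _ _).trans (Finset.sum_le_sum fun i _ => ?_)
        rw [vecMulVec_split]
        refine (norm_add_le _ _).trans ?_
        rw [norm_vecMulVec_eq, norm_vecMulVec_eq]
    _ = (1 / (N : ℝ)) * ∑ i : Fin N, ‖u i‖ * ‖u i - v i‖ +
        (1 / (N : ℝ)) * ∑ i : Fin N, ‖v i‖ * ‖u i - v i‖ := by
        rw [← mul_add, ← Finset.sum_add_distrib]
        congr 1
        exact Finset.sum_congr rfl fun i _ => by ring
    _ ≤ Real.sqrt ((1 / (N : ℝ)) * ∑ i : Fin N, ‖u i‖ ^ 2) *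
          Real.sqrt ((1 / (N : ℝ)) * ∑ i : Fin N, ‖u i - v i‖ ^ 2) +
        Real.sqrt ((1 / (N : ℝ)) * ∑ i : Fin N, ‖v i‖ ^ 2) *
          Real.sqrt ((1 / (N : ℝ)) * ∑ i : Fin N, ‖u i - v i‖ ^ 2) :=
        add_le_add (key _ hc _ _) (key _ hc _ _)
    _ = _ := by ring
end

section
/- (Uniform Slutsky lemma: a uniformly negligible remainder does not affect uniform convergence of distribution functions, as used in the proof of Theorem 3.1 to dispose of the remainder term of the asymptotic expansion.) Let Ω be a measurable space, Θ an index set, and μ : ℕ → Θ → MeasureTheory.Measure Ω a family of measures with IsProbabilityMeasure (μ n θ) for all n, θ. Let V, R : ℕ → Θ → Ω → ℝ and G : Θ → ℝ → ℝ with each G θ nondecreasing. Assume: (i) for every x ∈ ℝ and every ε > 0 there exists N₀ such that for all n ≥ N₀ and all θ ∈ Θ, |((μ n θ) {ω | V n θ ω ≤ x}).toReal − G θ x| ≤ ε; (ii) for every δ > 0 and every ε > 0 there exists N₀ such that for all n ≥ N₀ and all θ ∈ Θ, (μ n θ) {ω | δ < |R n θ ω|} ≤ ENNReal.ofReal ε;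 (iii) for every ε > 0 there exists δ > 0 such that for all θ ∈ Θ and all x ∈ ℝ, G θ (x + δ) − G θ (x − δ) ≤ ε. Then for every x ∈ ℝ and every ε > 0 there exists N₀ such that for all n ≥ N₀ and all θ ∈ Θ, |((μ n θ) {ω | V n θ ω + R n θ ω ≤ x}).toReal − G θ x| ≤ ε. -/
open MeasureTheory

/-- Uniform Slutsky lemma: a uniformly negligible remainder does not affect
uniform convergence of distribution functions. -/
theorem uniform_slutsky
    {Ω Θ : Type*} [MeasurableSpace Ω]
    (μ : ℕ → Θ → Measure Ω) (hμ : ∀ n θ, IsProbabilityMeasure (μ n θ))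
    (V R : ℕ → Θ → Ω → ℝ) (G : Θ → ℝ → ℝ) (hGmono : ∀ θ, Monotone (G θ))
    (hV : ∀ x : ℝ, ∀ ε > (0 : ℝ), ∃ N₀ : ℕ, ∀ n ≥ N₀, ∀ θ : Θ,
      |((μ n θ) {ω | V n θ ω ≤ x}).toReal - G θ x| ≤ ε)
    (hR : ∀ δ > (0 : ℝ), ∀ ε > (0 : ℝ), ∃ N₀ : ℕ, ∀ n ≥ N₀, ∀ θ : Θ,
      μ n θ {ω | δ < |R n θ ω|} ≤ ENNReal.ofReal ε)
    (hG : ∀ ε > (0 : ℝ), ∃ δ > (0 : ℝ), ∀ θ : Θ, ∀ x : ℝ,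
      G θ (x + δ) - G θ (x - δ) ≤ ε) :
    ∀ x : ℝ, ∀ ε > (0 : ℝ), ∃ N₀ : ℕ, ∀ n ≥ N₀, ∀ θ : Θ,
      |((μ n θ) {ω | V n θ ω + R n θ ω ≤ x}).toReal - G θ x| ≤ ε := by
  intro x ε hε
  obtain ⟨δ, hδ, hGδ⟩ := hG (ε / 4) (by linarith)
  obtain ⟨N₁, hN₁⟩ := hV (x + δ) (ε / 4) (by linarith)
  obtain ⟨N₂, hN₂⟩ := hV (x - δ) (ε / 4) (by linarith)
  obtain ⟨N₃, hN₃⟩ := hR δ hδ (ε / 4) (by linarith)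
  refine ⟨max N₁ (max N₂ N₃), fun n hn θ => ?_⟩
  have hn1 : n ≥ N₁ := le_trans (le_max_left _ _) hn
  have hn2 : n ≥ N₂ := le_trans (le_trans (le_max_left _ _) (le_max_right _ _)) hn
  have hn3 : n ≥ N₃ := le_trans (le_trans (le_max_right _ _) (le_max_right _ _)) hn
  haveI := hμ n θ
  have hfin : ∀ s : Set Ω, μ n θ s ≠ ⊤ := fun s => measure_ne_top _ _
  have hRreal : ((μ n θ) {ω | δ < |R n θ ω|}).toReal ≤ ε / 4 :=
    ENNReal.toReal_le_of_le_ofReal (by linarith) (hN₃ n hn3 θ)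
  have key : ∀ s t u : Set Ω, s ⊆ t ∪ u →
      ((μ n θ) s).toReal ≤ ((μ n θ) t).toReal + ((μ n θ) u).toReal := by
    intro s t u hsub
    have h1 : μ n θ s ≤ μ n θ t + μ n θ u :=
      le_trans (measure_mono hsub) (measure_union_le _ _)
    have h2 := ENNReal.toReal_mono (ENNReal.add_ne_top.mpr ⟨hfin t, hfin u⟩) h1
    rwa [ENNReal.toReal_add (hfin t) (hfin u)] at h2
  have sub1 : {ω | V n θ ω + R n θ ω ≤ x} ⊆
      {ω | V n θ ω ≤ x + δ} ∪ {ω | δ < |R n θ ω|} := by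
    intro ω hω
    by_cases h : δ < |R n θ ω|
    · exact Or.inr h
    · push_neg at h
      have h' := abs_le.mp h
      exact Or.inl (by simp only [Set.mem_setOf_eq] at hω ⊢; linarith [h'.1])
  have sub2 : {ω | V n θ ω ≤ x - δ} ⊆
      {ω | V n θ ω + R n θ ω ≤ x} ∪ {ω | δ < |R n θ ω|} := by
    intro ω hω
    by_cases h : δ < |R n θ ω|
    · exact Or.inr h
    · push_neg at h
      have h' := abs_le.mp h
      exact Or.inl (by simp only [Set.mem_setOf_eq] at hω ⊢; linarith [h'.2])
  have hU := key _ _ _ sub1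
  have hL := key _ _ _ sub2
  have hV1 := abs_le.mp (hN₁ n hn1 θ)
  have hV2 := abs_le.mp (hN₂ n hn2 θ)
  have hG1 := hGδ θ x
  have hm1 : G θ (x - δ) ≤ G θ x := hGmono θ (by linarith)
  have hm2 : G θ x ≤ G θ (x + δ) := hGmono θ (by linarith)
  rw [abs_le]
  constructor <;> [linarith [hV2.1, hV1.2]; linarith [hV1.2, hV2.1]]
end

section
/- (Existence of a uniformly fine partition for a compactly parametrized family of Gaussian distribution functions, the partition step in the proof of Theorem 3.2.) Let Θ be a compact topological space, m : Θ → ℝ continuous, and v : Θ → ℝ≥0 continuous with v θ ≠ 0 for every θ ∈ Θ. Define G θ x = ((ProbabilityTheory.gaussianReal (m θ) (v θ)) (Set.Iic x)).toReal, the cumulative distribution function of the normal distribution with mean m θ and variance v θ. Then for every δ > 0 there exist an integer M ≥ 1 and a strictly monotone increasing a : Fin M → ℝ such that for every θ ∈ Θ: G θ (a 0) ≤ δ, 1 − G θ (a (M−1)) ≤ δ, and G θ (a (i+1)) − G θ (a i) ≤ δ for every index i with i + 1 < M. -/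
open MeasureTheory ProbabilityTheory
open scoped NNReal

open Filter Set

lemma aux_std (μ : ℝ) {v : ℝ≥0} (hv : v ≠ 0) (x : ℝ) :
    gaussianReal μ v (Set.Iic x)
      = gaussianReal 0 1 (Set.Iic ((x - μ) / Real.sqrt v)) := by
  have hvpos : (0:ℝ) < (v:ℝ) := by positivity
  have hσ : (0:ℝ) < Real.sqrt v := Real.sqrt_pos.2 hvpos
  have h2 : (⟨(Real.sqrt v)^2, sq_nonneg _⟩ : ℝ≥0) * 1 = v := by
    ext
    simp [Real.sq_sqrt hvpos.le]
  have h1 : (gaussianReal 0 1).map (fun y => Real.sqrt v * y + μ) = gaussianReal μ v := by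
    have hmul := gaussianReal_map_const_mul (μ := 0) (v := 1) (Real.sqrt v)
    rw [mul_zero, show (NNReal.mk (Real.sqrt v ^ 2) (sq_nonneg _) * 1 : ℝ≥0) = v from h2] at hmul
    have : (fun y => Real.sqrt v * y + μ) = (· + μ) ∘ (Real.sqrt v * ·) := rfl
    rw [this, ← Measure.map_map (measurable_add_const μ) (measurable_const_mul _),
      hmul, gaussianReal_map_add_const, zero_add]
  rw [← h1, Measure.map_apply (by fun_prop) measurableSet_Iic]
  congr 1
  ext y
  simp only [Set.mem_preimage, Set.mem_Iic]
  rw [le_div_iff₀ hσ]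
  constructor <;> intro h <;> nlinarith

lemma aux_lip {a b : ℝ} (hab : a ≤ b) :
    ((gaussianReal 0 1) (Set.Iic b)).toReal - ((gaussianReal 0 1) (Set.Iic a)).toReal
      ≤ (b - a) * (Real.sqrt (2 * Real.pi))⁻¹ := by
  have hfin : ∀ s : Set ℝ, gaussianReal 0 1 s ≠ ⊤ := fun s => measure_ne_top _ s
  have hsplit : gaussianReal 0 1 (Set.Iic a) + gaussianReal 0 1 (Set.Ioc a b)
      = gaussianReal 0 1 (Set.Iic b) := by
    rw [← measure_union (by exact Set.Iic_disjoint_Ioc le_rfl) measurableSet_Ioc,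
      Set.Iic_union_Ioc_eq_Iic hab]
  have hbound : gaussianReal 0 1 (Set.Ioc a b)
      ≤ ENNReal.ofReal ((b - a) * (Real.sqrt (2 * Real.pi))⁻¹) := by
    rw [gaussianReal_apply 0 one_ne_zero]
    calc ∫⁻ x in Set.Ioc a b, gaussianPDF 0 1 x
        ≤ ∫⁻ _ in Set.Ioc a b, ENNReal.ofReal ((Real.sqrt (2 * Real.pi))⁻¹) := by
          refine lintegral_mono fun x => ?_
          unfold gaussianPDF gaussianPDFReal
          refine ENNReal.ofReal_le_ofReal ?_
          have h1 : Real.exp (-(x - 0) ^ 2 / (2 * (1:ℝ≥0))) ≤ 1 := by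
            rw [Real.exp_le_one_iff]
            have : (0:ℝ) ≤ (x - 0)^2 := sq_nonneg _
            simp only [NNReal.coe_one, mul_one]
            nlinarith
          calc (Real.sqrt (2 * Real.pi * (1:ℝ≥0)))⁻¹ * Real.exp (-(x - 0) ^ 2 / (2 * (1:ℝ≥0)))
              ≤ (Real.sqrt (2 * Real.pi * (1:ℝ≥0)))⁻¹ * 1 := by
                refine mul_le_mul_of_nonneg_left h1 (by positivity)
            _ = (Real.sqrt (2 * Real.pi))⁻¹ := by norm_num
      _ = ENNReal.ofReal ((b - a) * (Real.sqrt (2 * Real.pi))⁻¹) := by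
          rw [setLIntegral_const, Real.volume_Ioc, ← ENNReal.ofReal_mul (by positivity)]
          ring_nf
  have h1 : ((gaussianReal 0 1) (Set.Iic b)).toReal
      = ((gaussianReal 0 1) (Set.Iic a)).toReal + ((gaussianReal 0 1) (Set.Ioc a b)).toReal := by
    rw [← ENNReal.toReal_add (hfin _) (hfin _), hsplit]
  rw [h1]
  have hnn : (0:ℝ) ≤ (b - a) * (Real.sqrt (2 * Real.pi))⁻¹ := mul_nonneg (by linarith) (by positivity)
  have := ENNReal.toReal_le_of_le_ofReal hnn hbound
  linarith

lemma aux_compl (x : ℝ) :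
    ((gaussianReal 0 1) (Set.Iic x)).toReal + ((gaussianReal 0 1) (Set.Ici x)).toReal = 1 := by
  have hx : gaussianReal 0 1 ({x} : Set ℝ) = 0 :=
    gaussianReal_absolutelyContinuous 0 one_ne_zero (Real.volume_singleton)
  have := measure_union_add_inter (μ := gaussianReal 0 1) (Set.Iic x) (measurableSet_Ici (a := x))
  rw [Set.Iic_union_Ici, Set.Iic_inter_Ici, Set.Icc_self, hx, add_zero, measure_univ] at this
  rw [← ENNReal.toReal_add (measure_ne_top _ _) (measure_ne_top _ _), ← this, ENNReal.toReal_one]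

lemma aux_top : Filter.Tendsto (fun x => ((gaussianReal 0 1) (Set.Iic x)).toReal)
    Filter.atTop (nhds 1) := by
  have h := MeasureTheory.tendsto_measure_Iic_atTop (gaussianReal 0 1)
  rw [measure_univ] at h
  have := (ENNReal.tendsto_toReal (by simp)).comp h
  exact this

lemma aux_bot : Filter.Tendsto (fun x => ((gaussianReal 0 1) (Set.Iic x)).toReal)
    Filter.atBot (nhds 0) := by
  have h := MeasureTheory.tendsto_measure_Ici_atBot (gaussianReal 0 1)
  rw [measure_univ] at h
  have h2 : Filter.Tendsto (fun x => ((gaussianReal 0 1) (Set.Ici x)).toReal)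
      Filter.atBot (nhds 1) := by
    exact (ENNReal.tendsto_toReal (by simp)).comp h
  have heq : (fun x => ((gaussianReal 0 1) (Set.Iic x)).toReal)
      = fun x => 1 - ((gaussianReal 0 1) (Set.Ici x)).toReal := by
    ext x
    have := aux_compl x
    linarith
  rw [heq]
  have := (tendsto_const_nhds (x := (1:ℝ)) (f := Filter.atBot)).sub h2
  simpa using this

/-- Existence of a uniformly fine partition for a compactly parametrized family
of Gaussian distribution functions (partition step in the proof of
Theorem 3.2). -/
theorem gaussian_family_uniform_partition
    {Θ : Type*} [TopologicalSpace Θ] [CompactSpace Θ]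
    (m : Θ → ℝ) (hm : Continuous m)
    (v : Θ → ℝ≥0) (hv : Continuous v) (hv0 : ∀ θ, v θ ≠ 0)
    (G : Θ → ℝ → ℝ)
    (hG : ∀ θ x, G θ x = ((gaussianReal (m θ) (v θ)) (Set.Iic x)).toReal) :
    ∀ δ > (0 : ℝ), ∃ M : ℕ, ∃ hM : 1 ≤ M, ∃ a : Fin M → ℝ,
      StrictMono a ∧ ∀ θ : Θ,
        G θ (a ⟨0, hM⟩) ≤ δ ∧
        1 - G θ (a ⟨M - 1, by omega⟩) ≤ δ ∧
        ∀ i : Fin M, ∀ h : i.val + 1 < M, G θ (a ⟨i.val + 1, h⟩) - G θ (a i) ≤ δ := by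
  intro δ hδ
  by_cases hne : Nonempty Θ
  swap
  · refine ⟨1, le_rfl, fun _ => 0, ?_, fun θ => absurd ⟨θ⟩ hne⟩
    intro i j hij
    exact absurd (Subsingleton.elim i j ▸ hij) (lt_irrefl _)
  -- notation
  set Φ : ℝ → ℝ := fun x => ((gaussianReal 0 1) (Set.Iic x)).toReal with hΦ
  have hΦmono : Monotone Φ := fun x y hxy =>
    ENNReal.toReal_mono (measure_ne_top _ _) (measure_mono (Set.Iic_subset_Iic.2 hxy))
  set σ : Θ → ℝ := fun θ => Real.sqrt (v θ) with hσdef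
  have hσcont : Continuous σ := Real.continuous_sqrt.comp (NNReal.continuous_coe.comp hv)
  have hσpos : ∀ θ, 0 < σ θ := fun θ =>
    Real.sqrt_pos.2 (by exact_mod_cast (pos_iff_ne_zero.2 (hv0 θ)))
  have hGstd : ∀ θ x, G θ x = Φ ((x - m θ) / σ θ) := by
    intro θ x
    rw [hG, aux_std (m θ) (hv0 θ) x]
  -- extrema
  obtain ⟨θm1, -, hm1'⟩ := isCompact_univ.exists_isMinOn Set.univ_nonempty hm.continuousOn
  obtain ⟨θm2, -, hm2'⟩ := isCompact_univ.exists_isMaxOn Set.univ_nonempty hm.continuousOn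
  obtain ⟨θs1, -, hs1'⟩ := isCompact_univ.exists_isMinOn Set.univ_nonempty hσcont.continuousOn
  obtain ⟨θs2, -, hs2'⟩ := isCompact_univ.exists_isMaxOn Set.univ_nonempty hσcont.continuousOn
  have hm1 : ∀ θ, m θm1 ≤ m θ := fun θ => hm1' (Set.mem_univ θ)
  have hm2 : ∀ θ, m θ ≤ m θm2 := fun θ => hm2' (Set.mem_univ θ)
  have hs1 : ∀ θ, σ θs1 ≤ σ θ := fun θ => hs1' (Set.mem_univ θ)
  have hs2 : ∀ θ, σ θ ≤ σ θs2 := fun θ => hs2' (Set.mem_univ θ)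
  -- tail cutoffs
  obtain ⟨x₀, hx₀⟩ := (aux_bot.eventually (eventually_lt_nhds hδ)).exists
  obtain ⟨x₁, hx₁⟩ := (aux_top.eventually (eventually_gt_nhds (by linarith : 1 - δ < 1))).exists
  set X₀ : ℝ := min x₀ 0 with hX₀def
  set X₁ : ℝ := max x₁ 0 with hX₁def
  have hX₀le : X₀ ≤ 0 := min_le_right _ _
  have hX₁ge : 0 ≤ X₁ := le_max_right _ _
  have hΦX₀ : Φ X₀ ≤ δ := le_trans (hΦmono (min_le_left _ _)) hx₀.le
  have hΦX₁ : 1 - δ ≤ Φ X₁ := le_trans hx₁.le (hΦmono (le_max_left _ _))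
  -- partition constants
  set A : ℝ := m θm1 + σ θs2 * X₀ with hAdef
  set B : ℝ := m θm2 + σ θs2 * X₁ with hBdef
  set s : ℝ := δ * σ θs1 * Real.sqrt (2 * Real.pi) with hsdef
  have hspos : 0 < s := by
    have := hσpos θs1
    have h2π : 0 < Real.sqrt (2 * Real.pi) := Real.sqrt_pos.2 (by positivity)
    positivity
  set N : ℕ := ⌈(B - A) / s⌉₊ with hNdef
  refine ⟨N + 2, by omega, fun i => A + i * s, ?_, ?_⟩
  · intro i j hij
    have hij' : (i : ℝ) < (j : ℝ) := by exact_mod_cast hij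
    simp only
    nlinarith [mul_pos (sub_pos.2 hij') hspos]
  intro θ
  -- Lipschitz bound for G θ
  have hGlip : ∀ x y : ℝ, x ≤ y → G θ y - G θ x ≤ (y - x) / (σ θs1 * Real.sqrt (2 * Real.pi)) := by
    intro x y hxy
    rw [hGstd, hGstd]
    have h1 : (x - m θ) / σ θ ≤ (y - m θ) / σ θ := by
      gcongr
    calc Φ ((y - m θ) / σ θ) - Φ ((x - m θ) / σ θ)
        ≤ ((y - m θ) / σ θ - (x - m θ) / σ θ) * (Real.sqrt (2 * Real.pi))⁻¹ := aux_lip h1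
      _ = (y - x) / σ θ * (Real.sqrt (2 * Real.pi))⁻¹ := by
          ring
      _ ≤ (y - x) / σ θs1 * (Real.sqrt (2 * Real.pi))⁻¹ := by
          gcongr
          · exact hσpos θs1
          · exact hs1 θ
      _ = (y - x) / (σ θs1 * Real.sqrt (2 * Real.pi)) := by
          rw [div_mul_eq_div_div, div_div]
          rw [div_eq_mul_inv, div_eq_mul_inv, mul_inv]
          ring
  have hσθ := hσpos θ
  have hs2θ := hs2 θ
  have h2π : 0 < Real.sqrt (2 * Real.pi) := Real.sqrt_pos.2 (by positivity)
  refine ⟨?_, ?_, ?_⟩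
  · -- lower tail
    simp only [Fin.val_mk, Nat.cast_zero, zero_mul, add_zero]
    rw [hGstd]
    refine le_trans (le_trans (hΦmono ?_) (le_refl (Φ X₀))) hΦX₀
    rw [div_le_iff₀ hσθ]
    have hm1θ := hm1 θ
    nlinarith [mul_nonneg (sub_nonneg.2 hs2θ) (neg_nonneg.2 hX₀le)]
  · -- upper tail
    simp only [Fin.val_mk]
    rw [show (N + 2 - 1 : ℕ) = N + 1 from rfl]
    have hlast : B ≤ A + ((N : ℝ) + 1) * s := by
      have hceil : (B - A) / s ≤ (N : ℝ) := Nat.le_ceil _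
      have : B - A ≤ (N : ℝ) * s := by
        rwa [div_le_iff₀ hspos] at hceil
      nlinarith
    push_cast
    rw [hGstd]
    have hX₁le : X₁ ≤ (A + ((N : ℝ) + 1) * s - m θ) / σ θ := by
      rw [le_div_iff₀ hσθ]
      have hm2θ := hm2 θ
      nlinarith [mul_nonneg (sub_nonneg.2 hs2θ) hX₁ge]
    linarith [hΦmono hX₁le]
  · -- increments
    intro i h
    have hstep := hGlip (A + (i : ℝ) * s) (A + (((i : ℕ) : ℝ) + 1) * s) (by nlinarith)
    have heq : A + (((i : ℕ) : ℝ) + 1) * s - (A + (i : ℝ) * s) = s := by ring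
    rw [heq] at hstep
    have hδeq : s / (σ θs1 * Real.sqrt (2 * Real.pi)) = δ := by
      have hne : σ θs1 * Real.sqrt (2 * Real.pi) ≠ 0 := ne_of_gt (mul_pos (hσpos θs1) h2π)
      rw [hsdef, mul_assoc, mul_div_assoc, div_self hne, mul_one]
    push_cast
    calc G θ (A + (((i : ℕ) : ℝ) + 1) * s) - G θ (A + (i : ℝ) * s)
        ≤ s / (σ θs1 * Real.sqrt (2 * Real.pi)) := hstep
      _ = δ := hδeq
end
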